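/- For positive integers m and n, there is a quantum homomorphism from the complete graph K_m to the complete graph K_n if and only if m ≤ n. -/

import Mathlib

open Matrix Finset

def IsQuantumHom {V W : Type} [Fintype V] [Fintype W]
    (X : SimpleGraph V) (Y : SimpleGraph W) : Prop :=
  ∃ d : ℕ, 0 < d ∧ ∃ E : V → W → Matrix (Fin d) (Fin d) ℂ,
    (∀ x y, (E x y).IsHermitian ∧ E x y * E x y = E x y) ∧
    (∀ x, ∑ y, E x y = 1) ∧
    (∀ x y y', y ≠ y' → E x y * E x y' = 0) ∧
    (∀ x x' y y', X.Adj x x' → ¬ Y.Adj y y' → E x y * E x' y' = 0)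

open ComplexOrder in
lemma aux_trace_nonneg {d : ℕ} (M : Matrix (Fin d) (Fin d) ℂ) (h : M.PosSemidef) :
    0 ≤ M.trace := by
  rw [Matrix.trace]
  apply Finset.sum_nonneg
  intro i _
  have := h.dotProduct_mulVec_nonneg (Pi.single i 1)
  simpa [dotProduct, Matrix.mulVec, Pi.single_apply, Matrix.diag] using this

open ComplexOrder in
lemma aux_trace_le {d : ℕ} (S : Matrix (Fin d) (Fin d) ℂ) (hH : S.IsHermitian)
    (hI : S * S = S) : S.trace ≤ (d : ℂ) := by
  have hI' : (1 - S) * (1 - S) = 1 - S := by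
    simp [mul_sub, sub_mul, hI]
  have h1 : (1 - S).PosSemidef := by
    have hH' : (1 - S).IsHermitian := (Matrix.isHermitian_one).sub hH
    have heq : (1 - S) = (1 - S)ᴴ * (1 - S) := by rw [hH', hI']
    rw [heq]
    exact Matrix.posSemidef_conjTranspose_mul_self _
  have := aux_trace_nonneg _ h1
  rw [Matrix.trace_sub, Matrix.trace_one] at this
  simp only [Finset.card_univ, Fintype.card_fin] at this
  exact sub_nonneg.mp this

theorem quantumHom_complete_iff (m n : ℕ) (hm : 1 ≤ m) (hn : 1 ≤ n) :
    IsQuantumHom (⊤ : SimpleGraph (Fin m)) (⊤ : SimpleGraph (Fin n)) ↔ m ≤ n := by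
  constructor
  · rintro ⟨d, hd, E, hproj, hsum, -, hadj⟩
    have horth : ∀ y : Fin n, ∀ x x' : Fin m, x ≠ x' → E x y * E x' y = 0 := by
      intro y x x' hxx
      exact hadj x x' y y (by simpa using hxx) (by simp)
    have hSy : ∀ y : Fin n, (∑ x, E x y) * (∑ x, E x y) = ∑ x, E x y := by
      intro y
      rw [Finset.sum_mul_sum]
      refine Finset.sum_congr rfl fun x _ => ?_
      rw [Finset.sum_eq_single x (fun x' _ hx' => horth y x x' hx'.symm) (by simp)]
      exact (hproj x y).2
    have hSyH : ∀ y : Fin n, (∑ x, E x y).IsHermitian := by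
      intro y
      unfold Matrix.IsHermitian
      rw [Matrix.conjTranspose_sum]
      exact Finset.sum_congr rfl fun x _ => (hproj x y).1
    have key : ∀ y : Fin n, ((∑ x, E x y).trace).re ≤ (d : ℝ) := by
      intro y
      have := aux_trace_le _ (hSyH y) (hSy y)
      simpa using (Complex.le_def.mp this).1
    have total : (∑ y, ((∑ x : Fin m, E x y).trace).re) = m * d := by
      have hcomm : ∑ y : Fin n, (∑ x : Fin m, E x y).trace
          = ∑ x : Fin m, (∑ y, E x y).trace := by
        simp_rw [Matrix.trace_sum]
        rw [Finset.sum_comm]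
      calc ∑ y, ((∑ x : Fin m, E x y).trace).re
          = (∑ y : Fin n, (∑ x : Fin m, E x y).trace).re := (Complex.re_sum _ _).symm
        _ = (∑ x : Fin m, (∑ y, E x y).trace).re := by rw [hcomm]
        _ = m * d := by simp [hsum, Matrix.trace_one]
    have hle : (m : ℝ) * d ≤ n * d := by
      rw [← total]
      calc ∑ y, ((∑ x : Fin m, E x y).trace).re ≤ ∑ _y : Fin n, (d : ℝ) :=
            Finset.sum_le_sum fun y _ => key y
        _ = n * d := by simp [mul_comm]
    have : (m : ℝ) ≤ n := le_of_mul_le_mul_right hle (by exact_mod_cast hd)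
    exact_mod_cast this
  · intro h
    refine ⟨1, one_pos, fun x y => if (Fin.castLE h x) = y then 1 else 0, ?_, ?_, ?_, ?_⟩
    · intro x y
      dsimp only
      split_ifs <;> simp [Matrix.isHermitian_one]
    · intro x
      simp
    · intro x y y' hyy
      dsimp only
      split_ifs with h1 h2 <;> simp_all
    · intro x x' y y' hadj hnadj
      simp only [SimpleGraph.top_adj] at hadj hnadj
      have hy : y = y' := by tauto
      subst hy
      dsimp only
      split_ifs with h1 h2
      · exact absurd (Fin.castLE_injective h (h1.trans h2.symm)) hadj
      · simp
      · simp
      · simp
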